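/- Let Γ = ∂D be C², u, w smooth functions near Γ, λ, μ ∈ C¹(Γ), and define Mf := div_Γ(μ∇_Γ f) and L f := Mf + λf. Suppose u and w satisfy the GIBC ∂u/∂ν = −Lu and ∂w/∂ν = −Lw on Γ. Then the following pointwise identity holds on Γ for the combination appearing in the shape derivative: ∫_Γ [ (ε·ν)(Lu)(Lw) − λ(ε·ν)w(Lu) − λ(ε·ν)u(Lw) + μ∇_Γ((ε·ν)Lu)·∇_Γ w + μ∇_Γ((ε·ν)Lw)·∇_Γ u ] ds = −∫_Γ (ε·ν)(Lu)(Lw) ds. -/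
import Mathlib


open MeasureTheory

/-- Integration-by-parts identity on the closed surface `Γ = ∂D`
(surface measure `σ`). Let `grad` be the tangential gradient, `Mμ f = div_Γ(μ∇_Γ f)`
(so that `∫ μ ∇_Γ f·∇_Γ g = −∫ (Mμ f) g`, hypothesis `hIBP`) and `L f = Mμ f + λf`.
If `u`, `w` satisfy the GIBC `∂u/∂ν = −Lu`, `∂w/∂ν = −Lw` on `Γ`, then
`∫_Γ [(ε·ν)(Lu)(Lw) − λ(ε·ν)w(Lu) − λ(ε·ν)u(Lw) + μ∇_Γ((ε·ν)Lu)·∇_Γ w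
  + μ∇_Γ((ε·ν)Lw)·∇_Γ u] ds = −∫_Γ (ε·ν)(Lu)(Lw) ds`. -/
theorem stmt16 {Γ : Type*} [MeasurableSpace Γ] (σ : Measure Γ) (n : ℕ)
    (grad : (Γ → ℂ) → Γ → Fin n → ℂ) (Mμ : (Γ → ℂ) → Γ → ℂ)
    (lam μ εν u w dnu dnw : Γ → ℂ)
    (hIBP : ∀ f g : Γ → ℂ,
      ∫ x, μ x * ∑ i, grad f x i * grad g x i ∂σ = -∫ x, Mμ f x * g x ∂σ)
    (hu : ∀ x, dnu x = -(Mμ u x + lam x * u x))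
    (hw : ∀ x, dnw x = -(Mμ w x + lam x * w x))
    (hi1 : Integrable (fun x => εν x * (Mμ u x + lam x * u x) * (Mμ w x + lam x * w x)) σ)
    (hi2 : Integrable (fun x => lam x * εν x * w x * (Mμ u x + lam x * u x)) σ)
    (hi3 : Integrable (fun x => lam x * εν x * u x * (Mμ w x + lam x * w x)) σ)
    (hi4 : Integrable (fun x => μ x * ∑ i,
      grad (fun y => εν y * (Mμ u y + lam y * u y)) x i * grad w x i) σ)
    (hi5 : Integrable (fun x => μ x * ∑ i,
      grad (fun y => εν y * (Mμ w y + lam y * w y)) x i * grad u x i) σ) :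
    ∫ x, (εν x * (Mμ u x + lam x * u x) * (Mμ w x + lam x * w x)
        - lam x * εν x * w x * (Mμ u x + lam x * u x)
        - lam x * εν x * u x * (Mμ w x + lam x * w x)
        + μ x * ∑ i, grad (fun y => εν y * (Mμ u y + lam y * u y)) x i * grad w x i
        + μ x * ∑ i, grad (fun y => εν y * (Mμ w y + lam y * w y)) x i * grad u x i) ∂σ
      = -∫ x, εν x * (Mμ u x + lam x * u x) * (Mμ w x + lam x * w x) ∂σ := by
  have key4 : ∫ x, μ x * ∑ i,
      grad (fun y => εν y * (Mμ u y + lam y * u y)) x i * grad w x i ∂σ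
      = -∫ x, Mμ w x * (εν x * (Mμ u x + lam x * u x)) ∂σ := by
    rw [← hIBP w (fun y => εν y * (Mμ u y + lam y * u y))]
    congr 1; funext x; congr 1
    exact Finset.sum_congr rfl fun i _ => mul_comm _ _
  have key5 : ∫ x, μ x * ∑ i,
      grad (fun y => εν y * (Mμ w y + lam y * w y)) x i * grad u x i ∂σ
      = -∫ x, Mμ u x * (εν x * (Mμ w x + lam x * w x)) ∂σ := by
    rw [← hIBP u (fun y => εν y * (Mμ w y + lam y * w y))]
    congr 1; funext x; congr 1
    exact Finset.sum_congr rfl fun i _ => mul_comm _ _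
  have hMw : ∫ x, Mμ w x * (εν x * (Mμ u x + lam x * u x)) ∂σ
      = (∫ x, εν x * (Mμ u x + lam x * u x) * (Mμ w x + lam x * w x) ∂σ)
        - ∫ x, lam x * εν x * w x * (Mμ u x + lam x * u x) ∂σ := by
    rw [← integral_sub hi1 hi2]; congr 1; funext x; ring
  have hMu : ∫ x, Mμ u x * (εν x * (Mμ w x + lam x * w x)) ∂σ
      = (∫ x, εν x * (Mμ u x + lam x * u x) * (Mμ w x + lam x * w x) ∂σ)
        - ∫ x, lam x * εν x * u x * (Mμ w x + lam x * w x) ∂σ := by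
    rw [← integral_sub hi1 hi3]; congr 1; funext x; ring
  have hi12 : Integrable (fun x => εν x * (Mμ u x + lam x * u x) * (Mμ w x + lam x * w x)
      - lam x * εν x * w x * (Mμ u x + lam x * u x)) σ := hi1.sub hi2
  have hi123 : Integrable (fun x => εν x * (Mμ u x + lam x * u x) * (Mμ w x + lam x * w x)
      - lam x * εν x * w x * (Mμ u x + lam x * u x)
      - lam x * εν x * u x * (Mμ w x + lam x * w x)) σ := hi12.sub hi3
  have hi1234 : Integrable (fun x => εν x * (Mμ u x + lam x * u x) * (Mμ w x + lam x * w x)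
      - lam x * εν x * w x * (Mμ u x + lam x * u x)
      - lam x * εν x * u x * (Mμ w x + lam x * w x)
      + μ x * ∑ i, grad (fun y => εν y * (Mμ u y + lam y * u y)) x i * grad w x i) σ :=
    hi123.add hi4
  rw [integral_add hi1234 hi5, integral_add hi123 hi4, integral_sub hi12 hi3,
    integral_sub hi1 hi2, key4, key5, hMw, hMu]
  ring
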